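/- Let (α₁,α₂,α₃) ∈ ℂ³ be strongly non-resonant. Let g₁, g₂, g₃ ∈ ℂ⟦t⟧ each have zero constant term and satisfy αᵢ·gᵢ·gⱼ′ = αⱼ·gⱼ·gᵢ′ for all i, j ∈ {1,2,3}, where ′ denotes the formal derivative (this is the condition that the parametrized formal curve t ↦ (g₁(t), g₂(t), g₃(t)) is tangent to the diagonal vector field X = α₁x₁∂₁ + α₂x₂∂₂ + α₃x₃∂₃). Then at least two of g₁, g₂, g₃ are zero; hence every formal curve invariant by X is contained in one of the coordinate axes, i.e., the only formal separatrices of a strongly diagonalizable vector field are the coordinate axes in its diagonal form. -/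

import Mathlib

open PowerSeries

/-- A triple `(α₁, α₂, α₃) ∈ ℂ³` is strongly non-resonant if the only integers
`ℓ₁, ℓ₂, ℓ₃ ∈ ℤ` with `ℓ₁α₁ + ℓ₂α₂ + ℓ₃α₃ = 0` are `ℓ₁ = ℓ₂ = ℓ₃ = 0`. -/
def StronglyNonResonant (α₁ α₂ α₃ : ℂ) : Prop :=
  ∀ l₁ l₂ l₃ : ℤ, (l₁ : ℂ) * α₁ + (l₂ : ℂ) * α₂ + (l₃ : ℂ) * α₃ = 0 →
    l₁ = 0 ∧ l₂ = 0 ∧ l₃ = 0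

open Finset in
lemma key_lemma (a b : ℂ) (f h : PowerSeries ℂ) (hf : f ≠ 0) (hh : h ≠ 0)
    (hf0 : constantCoeff f = 0) (hh0 : constantCoeff h = 0)
    (rel : C a * f * d⁄dX ℂ h = C b * h * d⁄dX ℂ f) :
    ∃ m n : ℕ, 0 < m ∧ 0 < n ∧ a * n = b * m := by
  have hford := PowerSeries.order_finite_iff_ne_zero.mpr hf
  have hhord := PowerSeries.order_finite_iff_ne_zero.mpr hh
  obtain ⟨m, hm⟩ := WithTop.ne_top_iff_exists.mp hford.ne
  obtain ⟨n, hn⟩ := WithTop.ne_top_iff_exists.mp hhord.ne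
  have hcf : coeff m f ≠ 0 := (PowerSeries.order_eq_nat.mp hm.symm).1
  have hcfl : ∀ i, i < m → coeff i f = 0 := (PowerSeries.order_eq_nat.mp hm.symm).2
  have hch : coeff n h ≠ 0 := (PowerSeries.order_eq_nat.mp hn.symm).1
  have hchl : ∀ i, i < n → coeff i h = 0 := (PowerSeries.order_eq_nat.mp hn.symm).2
  have hm0 : 0 < m := by
    rcases Nat.eq_zero_or_pos m with h0 | h0
    · exfalso; apply hcf; rw [h0]; simpa [PowerSeries.coeff_zero_eq_constantCoeff] using hf0
    · exact h0
  have hn0 : 0 < n := by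
    rcases Nat.eq_zero_or_pos n with h0 | h0
    · exfalso; apply hch; rw [h0]; simpa [PowerSeries.coeff_zero_eq_constantCoeff] using hh0
    · exact h0
  refine ⟨m, n, hm0, hn0, ?_⟩
  obtain ⟨n', rfl⟩ : ∃ n', n = n' + 1 := ⟨n - 1, (Nat.succ_pred_eq_of_pos hn0).symm⟩
  obtain ⟨m', rfl⟩ : ∃ m', m = m' + 1 := ⟨m - 1, (Nat.succ_pred_eq_of_pos hm0).symm⟩
  have hco := congrArg (coeff (m' + 1 + n')) rel
  rw [mul_assoc, mul_assoc, coeff_C_mul, coeff_C_mul, coeff_mul, coeff_mul] at hco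
  have hL : ∑ p ∈ antidiagonal (m' + 1 + n'), coeff p.1 f * coeff p.2 (d⁄dX ℂ h)
      = coeff (m'+1) f * (coeff (n'+1) h * (n' + 1)) := by
    rw [Finset.sum_eq_single_of_mem (m'+1, n')]
    · rw [coeff_derivative]
    · simp [Finset.mem_antidiagonal]
    · rintro ⟨k, l⟩ hmem hne
      replace hmem : k + l = m' + 1 + n' := by simpa using hmem
      rcases lt_trichotomy k (m'+1) with hk | hk | hk
      · rw [hcfl k hk, zero_mul]
      · exfalso; apply hne; simp only [Prod.mk.injEq]; omega
      · have hl : l + 1 < n' + 1 := by omega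
        rw [coeff_derivative, hchl _ hl, zero_mul, mul_zero]
  have hR : ∑ p ∈ antidiagonal (m' + 1 + n'), coeff p.1 h * coeff p.2 (d⁄dX ℂ f)
      = coeff (n'+1) h * (coeff (m'+1) f * (m' + 1)) := by
    rw [Finset.sum_eq_single_of_mem (n'+1, m')]
    · rw [coeff_derivative]
    · simp [Finset.mem_antidiagonal]; omega
    · rintro ⟨k, l⟩ hmem hne
      replace hmem : k + l = m' + 1 + n' := by simpa using hmem
      rcases lt_trichotomy k (n'+1) with hk | hk | hk
      · rw [hchl k hk, zero_mul]
      · exfalso; apply hne; simp only [Prod.mk.injEq]; omega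
      · have hl : l + 1 < m' + 1 := by omega
        rw [coeff_derivative, hcfl _ hl, zero_mul, mul_zero]
  rw [hL, hR] at hco
  have key : a * ((n' : ℂ) + 1) = b * ((m' : ℂ) + 1) := by
    apply mul_left_cancel₀ hcf
    apply mul_left_cancel₀ hch
    linear_combination hco
  push_cast
  exact key


/-- A formal curve `t ↦ (g₁(t), g₂(t), g₃(t))` tangent to the diagonal vector field
`X = α₁x₁∂₁ + α₂x₂∂₂ + α₃x₃∂₃` with strongly non-resonant eigenvalues is contained
in a coordinate axis: at least two of `g₁, g₂, g₃` vanish. -/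
theorem separatrices_are_coordinate_axes (α : Fin 3 → ℂ)
    (hres : StronglyNonResonant (α 0) (α 1) (α 2))
    (g : Fin 3 → PowerSeries ℂ)
    (hg0 : ∀ i, constantCoeff (g i) = 0)
    (htan : ∀ i j : Fin 3, C (α i) * g i * d⁄dX ℂ (g j)
        = C (α j) * g j * d⁄dX ℂ (g i)) :
    (g 0 = 0 ∧ g 1 = 0) ∨ (g 0 = 0 ∧ g 2 = 0) ∨ (g 1 = 0 ∧ g 2 = 0) := by
  have pair : ∀ i j : Fin 3, g i ≠ 0 → g j ≠ 0 →
      ∃ m n : ℕ, 0 < m ∧ 0 < n ∧ α i * n = α j * m := fun i j hi hj =>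
    key_lemma (α i) (α j) (g i) (g j) hi hj (hg0 i) (hg0 j) (htan i j)
  by_cases h0 : g 0 = 0
  · by_cases h1 : g 1 = 0
    · exact Or.inl ⟨h0, h1⟩
    · by_cases h2 : g 2 = 0
      · exact Or.inr (Or.inl ⟨h0, h2⟩)
      · obtain ⟨m, n, hm, hn, heq⟩ := pair 1 2 h1 h2
        exfalso
        have := hres 0 n (-m) (by push_cast; linear_combination heq)
        omega
  · by_cases h1 : g 1 = 0
    · by_cases h2 : g 2 = 0
      · exact Or.inr (Or.inr ⟨h1, h2⟩)
      · obtain ⟨m, n, hm, hn, heq⟩ := pair 0 2 h0 h2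
        exfalso
        have := hres n 0 (-m) (by push_cast; linear_combination heq)
        omega
    · obtain ⟨m, n, hm, hn, heq⟩ := pair 0 1 h0 h1
      exfalso
      have := hres n (-m) 0 (by push_cast; linear_combination heq)
      omega
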